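/- Let W ∈ ℝ^{n×n} be doubly stochastic (entrywise nonnegative with all row and column sums equal to 1), let λ ∈ [0,1], and let J ∈ ℝ^{n×n} be the matrix with every entry equal to 1/n. Then ‖Wv‖ ≤ λ·‖v‖ holds for every v ∈ ℂ^n orthogonal to the all-ones vector if and only if W is a unit-circle λ-approximation of J. -/

import Mathlib

open Matrix

noncomputable section

/-- The sesquilinear form `x* A y`. -/
def sesq {m : Type*} [Fintype m] (A : Matrix m m ℂ) (x y : m → ℂ) : ℂ :=
  star x ⬝ᵥ (A *ᵥ y)

/-- The squared Euclidean norm of a complex vector. -/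
def vnormSq {m : Type*} [Fintype m] (x : m → ℂ) : ℝ :=
  ∑ i, Complex.normSq (x i)

/-- `W̃` is a *unit-circle ε-approximation* of `W`. -/
def UnitCircleApprox {m : Type*} [Fintype m] (ε : ℝ) (W Wt : Matrix m m ℂ) : Prop :=
  ∀ x y : m → ℂ,
    ‖sesq (W - Wt) x y‖ ≤
      ε / 2 * (vnormSq x + vnormSq y - ‖sesq W x x + sesq W y y‖)

namespace ExpanderAux

lemma vnormSq_nonneg {n : ℕ} (x : Fin n → ℂ) : 0 ≤ vnormSq x :=
  Finset.sum_nonneg fun _ _ => Complex.normSq_nonneg _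

lemma dot_self {n : ℕ} (z : Fin n → ℂ) : star z ⬝ᵥ z = (vnormSq z : ℂ) := by
  simp [dotProduct, vnormSq, Complex.normSq_eq_conj_mul_self]

lemma cs {n : ℕ} (x z : Fin n → ℂ) :
    ‖star x ⬝ᵥ z‖ ≤ Real.sqrt (vnormSq x) * Real.sqrt (vnormSq z) := by
  have h := norm_inner_le_norm (𝕜 := ℂ) (WithLp.toLp 2 x) (WithLp.toLp 2 z)
  simp only [EuclideanSpace.inner_eq_star_dotProduct, EuclideanSpace.norm_eq,
    WithLp.ofLp_toLp] at h
  calc ‖star x ⬝ᵥ z‖ = ‖z ⬝ᵥ star x‖ := by rw [dotProduct_comm]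
    _ ≤ Real.sqrt (∑ i, ‖x i‖ ^ 2) * Real.sqrt (∑ i, ‖z i‖ ^ 2) := h
    _ = Real.sqrt (vnormSq x) * Real.sqrt (vnormSq z) := by simp [vnormSq, Complex.sq_norm]

lemma key {n : ℕ} (hn : (n:ℂ) ≠ 0) (W : Matrix (Fin n) (Fin n) ℝ)
    (hrow : ∀ i, ∑ j, W i j = 1) (hcol : ∀ j, ∑ i, W i j = 1) (x y : Fin n → ℂ) :
    star (fun i => x i - (∑ j, x j)/n) ⬝ᵥ ((W.map Complex.ofReal) *ᵥ (fun i => y i - (∑ j, y j)/n))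
      = star x ⬝ᵥ ((W.map Complex.ofReal) *ᵥ y)
        - (starRingEnd ℂ) (∑ i, x i) * (∑ i, y i) / n := by
  have hW1 : ∀ i, ∑ j, ((W i j : ℂ)) = 1 := by
    intro i; rw [← Complex.ofReal_sum]; simp [hrow i]
  have hWc : ∀ j, ∑ i, ((W i j : ℂ)) = 1 := by
    intro j; rw [← Complex.ofReal_sum]; simp [hcol j]
  set sx := ∑ i, x i
  set sy := ∑ i, y i
  have hcard : (Finset.univ : Finset (Fin n)).card = n := by simp
  have inner : ∀ i, (∑ j, (W.map Complex.ofReal) i j * (y j - sy/n)) =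
      (∑ j, (W i j : ℂ) * y j) - sy/n := by
    intro i
    simp only [Matrix.map_apply, mul_sub]
    rw [Finset.sum_sub_distrib, ← Finset.sum_mul, hW1 i, one_mul]
  simp only [dotProduct, mulVec, Pi.star_apply]
  calc (∑ i, star ((fun i => x i - sx/n) i) * (∑ j, (W.map Complex.ofReal) i j * (y j - sy/n)))
      = ∑ i, ((starRingEnd ℂ) (x i) - (starRingEnd ℂ) (sx/n)) * ((∑ j, (W i j:ℂ) * y j) - sy/n) := by
        refine Finset.sum_congr rfl fun i _ => ?_
        rw [inner i]; simp [map_sub]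
    _ = (∑ i, (starRingEnd ℂ) (x i) * (∑ j, (W i j:ℂ) * y j))
        - (sy/n) * (starRingEnd ℂ) sx
        - (starRingEnd ℂ) (sx/n) * (∑ i, ∑ j, (W i j:ℂ) * y j)
        + n * ((starRingEnd ℂ) (sx/n) * (sy/n)) := by
        simp only [sub_mul, mul_sub, Finset.sum_sub_distrib, Finset.sum_add_distrib,
          Finset.sum_const, hcard, nsmul_eq_mul, ← Finset.sum_mul, ← Finset.mul_sum]
        ring_nf
        rw [← map_sum]
        ring
    _ = (∑ i, (starRingEnd ℂ) (x i) * (∑ j, (W i j:ℂ) * y j))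
        - (sy/n) * (starRingEnd ℂ) sx
        - (starRingEnd ℂ) (sx/n) * sy
        + n * ((starRingEnd ℂ) (sx/n) * (sy/n)) := by
        rw [Finset.sum_comm]
        congr 2
        simp only [← Finset.sum_mul, hWc, one_mul]
        rfl
    _ = (∑ i, (starRingEnd ℂ) (x i) * (∑ j, (W i j:ℂ) * y j)) - (starRingEnd ℂ) sx * sy / n := by
        rw [map_div₀, map_natCast]
        field_simp
        ring

lemma sesqJ {n : ℕ} (x y : Fin n → ℂ) :
    sesq (Matrix.of fun (_ _ : Fin n) => (1 / (n : ℂ))) x y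
      = (starRingEnd ℂ) (∑ i, x i) * (∑ i, y i) / n := by
  simp only [sesq, dotProduct, mulVec, Matrix.of_apply, Pi.star_apply, ← Finset.sum_mul,
    ← Finset.mul_sum, map_sum, starRingEnd_apply]
  ring

lemma sum_sub_avg {n : ℕ} (hn : (n:ℂ) ≠ 0) (x : Fin n → ℂ) :
    (∑ i, (x i - (∑ j, x j)/n)) = 0 := by
  rw [Finset.sum_sub_distrib, Finset.sum_const]
  simp only [Finset.card_univ, Fintype.card_fin, nsmul_eq_mul]
  field_simp
  simp

lemma pyth {n : ℕ} (hn : (n:ℂ) ≠ 0) (x : Fin n → ℂ) :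
    vnormSq x = vnormSq (fun i => x i - (∑ j, x j)/n) + Complex.normSq (∑ j, x j) / n := by
  have hnR : (n:ℝ) ≠ 0 := by exact_mod_cast (fun h => hn (by exact_mod_cast h))
  set sx := ∑ j, x j with hsx
  have h1 : ∀ i, Complex.normSq (x i)
      = Complex.normSq (x i - sx/n) + Complex.normSq (sx/n)
        + 2 * ((x i - sx/n) * (starRingEnd ℂ) (sx/n)).re := by
    intro i
    have := Complex.normSq_add (x i - sx/n) (sx/n)
    simpa using this
  rw [vnormSq, Finset.sum_congr rfl (fun i _ => h1 i)]
  rw [Finset.sum_add_distrib, Finset.sum_add_distrib, Finset.sum_const]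
  have h2 : (∑ i, 2 * ((x i - sx/n) * (starRingEnd ℂ) (sx/n)).re) = 0 := by
    rw [← Finset.mul_sum, ← Complex.re_sum, ← Finset.sum_mul, sum_sub_avg hn x]
    simp
  rw [h2, add_zero]
  have h3 : Complex.normSq (sx/n) = Complex.normSq sx / (n:ℝ)^2 := by
    simp [Complex.normSq_div, sq]
  rw [h3, vnormSq]
  simp only [Finset.card_univ, Fintype.card_fin, nsmul_eq_mul]
  field_simp
  simp only [mul_comm (x _) (n:ℂ)]
  ring

lemma mulVec_sum {n : ℕ} (W : Matrix (Fin n) (Fin n) ℝ) (hcol : ∀ j, ∑ i, W i j = 1)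
    (v : Fin n → ℂ) (hv : ∑ i, v i = 0) :
    ∑ i, ((W.map Complex.ofReal) *ᵥ v) i = 0 := by
  have hWc : ∀ j, ∑ i, ((W i j : ℂ)) = 1 := by
    intro j; rw [← Complex.ofReal_sum]; simp [hcol j]
  simp only [mulVec, dotProduct, Matrix.map_apply]
  rw [Finset.sum_comm]
  simp only [← Finset.sum_mul, hWc, one_mul, hv]

end ExpanderAux

open ExpanderAux

/-- For a doubly stochastic `W` and `λ ∈ [0,1]`:
`‖Wv‖ ≤ λ‖v‖` for all `v ⊥ 1` iff `W` is a unit-circle λ-approximation of `J`,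
the matrix with every entry `1/n`. -/
theorem expander_iff_unitCircle_approx_complete {n : ℕ}
    (W : Matrix (Fin n) (Fin n) ℝ)
    (hnn : ∀ i j, 0 ≤ W i j) (hrow : ∀ i, ∑ j, W i j = 1) (hcol : ∀ j, ∑ i, W i j = 1)
    (lam : ℝ) (hlam0 : 0 ≤ lam) (hlam1 : lam ≤ 1) :
    (∀ v : Fin n → ℂ, (∑ i, v i) = 0 →
        Real.sqrt (vnormSq ((W.map Complex.ofReal) *ᵥ v)) ≤
          lam * Real.sqrt (vnormSq v)) ↔
      UnitCircleApprox lam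
        (Matrix.of fun (_ _ : Fin n) => (1 / (n : ℂ)))
        (W.map Complex.ofReal) := by
  constructor
  · intro hop x y
    by_cases hn : (n:ℂ) = 0
    · have hn0 : n = 0 := by exact_mod_cast hn
      subst hn0
      simp [sesq, vnormSq, dotProduct, mulVec]
    -- main case
    set Wc := W.map Complex.ofReal with hWc
    set sx := ∑ i, x i with hsx
    set sy := ∑ i, y i with hsy
    set xp : Fin n → ℂ := fun i => x i - sx/n with hxp
    set yp : Fin n → ℂ := fun i => y i - sy/n with hyp
    have hkey := key hn W hrow hcol x y
    have hid : sesq ((Matrix.of fun (_ _ : Fin n) => (1 / (n : ℂ))) - Wc) x y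
        = -(star xp ⬝ᵥ (Wc *ᵥ yp)) := by
      have h1 : sesq ((Matrix.of fun (_ _ : Fin n) => (1 / (n : ℂ))) - Wc) x y
          = sesq (Matrix.of fun (_ _ : Fin n) => (1 / (n : ℂ))) x y - sesq Wc x y := by
        simp [sesq, Matrix.sub_mulVec, dotProduct_sub]
      rw [h1, sesqJ, hkey]
      simp only [sesq]
      ring
    have habs : ‖sesq ((Matrix.of fun (_ _ : Fin n) => (1 / (n : ℂ))) - Wc) x y‖
        = ‖star xp ⬝ᵥ (Wc *ᵥ yp)‖ := by
      rw [hid, norm_neg]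
    have hcs : ‖(star xp ⬝ᵥ (Wc *ᵥ yp))‖
        ≤ Real.sqrt (vnormSq xp) * Real.sqrt (vnormSq (Wc *ᵥ yp)) := cs _ _
    have hop' : Real.sqrt (vnormSq (Wc *ᵥ yp)) ≤ lam * Real.sqrt (vnormSq yp) :=
      hop yp (sum_sub_avg hn y)
    -- RHS computation
    have hJxx : sesq (Matrix.of fun (_ _ : Fin n) => (1 / (n : ℂ))) x x
        = ((Complex.normSq sx / n : ℝ) : ℂ) := by
      rw [sesqJ, ← hsx]
      push_cast
      rw [Complex.normSq_eq_conj_mul_self]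
    have hJyy : sesq (Matrix.of fun (_ _ : Fin n) => (1 / (n : ℂ))) y y
        = ((Complex.normSq sy / n : ℝ) : ℂ) := by
      rw [sesqJ, ← hsy]
      push_cast
      rw [Complex.normSq_eq_conj_mul_self]
    have hnR : (0:ℝ) < (n:ℝ) := by
      have : n ≠ 0 := by exact_mod_cast fun h => hn (by exact_mod_cast h)
      positivity
    have hJabs : ‖sesq (Matrix.of fun (_ _ : Fin n) => (1 / (n : ℂ))) x x
        + sesq (Matrix.of fun (_ _ : Fin n) => (1 / (n : ℂ))) y y‖
        = Complex.normSq sx / n + Complex.normSq sy / n := by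
      rw [hJxx, hJyy, ← Complex.ofReal_add, Complex.norm_real, Real.norm_eq_abs, abs_of_nonneg]
      have := Complex.normSq_nonneg sx
      have := Complex.normSq_nonneg sy
      positivity
    have px := pyth hn x
    have py := pyth hn y
    rw [← hsx, ← hxp] at px
    rw [← hsy, ← hyp] at py
    have hRHS : vnormSq x + vnormSq y - ‖sesq (Matrix.of fun (_ _ : Fin n) => (1 / (n : ℂ))) x x
        + sesq (Matrix.of fun (_ _ : Fin n) => (1 / (n : ℂ))) y y‖
        = vnormSq xp + vnormSq yp := by
      rw [hJabs]; linarith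
    rw [hRHS, habs]
    have hfin : Real.sqrt (vnormSq xp) * Real.sqrt (vnormSq (Wc *ᵥ yp))
        ≤ Real.sqrt (vnormSq xp) * (lam * Real.sqrt (vnormSq yp)) :=
      mul_le_mul_of_nonneg_left hop' (Real.sqrt_nonneg _)
    have h1 := Real.sq_sqrt (vnormSq_nonneg xp)
    have h2 := Real.sq_sqrt (vnormSq_nonneg yp)
    have h3 := Real.sqrt_nonneg (vnormSq xp)
    have h4 := Real.sqrt_nonneg (vnormSq yp)
    nlinarith [hcs, hfin, sq_nonneg (Real.sqrt (vnormSq xp) - Real.sqrt (vnormSq yp)), hlam0]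
  · intro H v hv
    set Wc := W.map Complex.ofReal with hWcdef
    have hWvsum : ∑ i, (Wc *ᵥ v) i = 0 := mulVec_sum W hcol v hv
    have hdotself : star (Wc *ᵥ v) ⬝ᵥ (Wc *ᵥ v) = ((vnormSq (Wc *ᵥ v) : ℝ) : ℂ) := dot_self _
    have hN := vnormSq_nonneg (Wc *ᵥ v)
    have hV := vnormSq_nonneg v
    by_cases hl : lam = 0
    · subst hl
      have H' := H (Wc *ᵥ v) v
      have hs1 : sesq ((Matrix.of fun (_ _ : Fin n) => (1 / (n : ℂ))) - Wc) (Wc *ᵥ v) v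
          = -((vnormSq (Wc *ᵥ v) : ℝ) : ℂ) := by
        have h1 : sesq ((Matrix.of fun (_ _ : Fin n) => (1 / (n : ℂ))) - Wc) (Wc *ᵥ v) v
            = sesq (Matrix.of fun (_ _ : Fin n) => (1 / (n : ℂ))) (Wc *ᵥ v) v
              - sesq Wc (Wc *ᵥ v) v := by
          simp [sesq, Matrix.sub_mulVec, dotProduct_sub]
        rw [h1, sesqJ, hWvsum]
        simp only [map_zero, zero_mul, zero_div, zero_sub, sesq, hdotself]
      rw [hs1] at H'
      have habs0 : ‖(-((vnormSq (Wc *ᵥ v) : ℝ) : ℂ))‖ = vnormSq (Wc *ᵥ v) := by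
        rw [norm_neg, Complex.norm_real, Real.norm_eq_abs, abs_of_nonneg hN]
      rw [habs0] at H'
      have : vnormSq (Wc *ᵥ v) ≤ 0 := by linarith [H']
      have hz : vnormSq (Wc *ᵥ v) = 0 := le_antisymm this hN
      rw [hz, Real.sqrt_zero, zero_mul]
    · have hlpos : 0 < lam := lt_of_le_of_ne hlam0 (Ne.symm hl)
      have H' := H (Wc *ᵥ v) (fun i => (lam:ℂ) * v i)
      have hysum : ∑ i, (lam:ℂ) * v i = 0 := by rw [← Finset.mul_sum, hv, mul_zero]
      have hsJ1 : sesq (Matrix.of fun (_ _ : Fin n) => (1 / (n : ℂ))) (Wc *ᵥ v) (Wc *ᵥ v) = 0 := by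
        rw [sesqJ, hWvsum]; simp
      have hsJ2 : sesq (Matrix.of fun (_ _ : Fin n) => (1 / (n : ℂ)))
          (fun i => (lam:ℂ) * v i) (fun i => (lam:ℂ) * v i) = 0 := by
        rw [sesqJ, hysum]; simp
      have hsmul : Wc *ᵥ (fun i => (lam:ℂ) * v i) = (lam:ℂ) • (Wc *ᵥ v) := by
        have : (fun i => (lam:ℂ) * v i) = (lam:ℂ) • v := rfl
        rw [this, Matrix.mulVec_smul]
      have hs1 : sesq ((Matrix.of fun (_ _ : Fin n) => (1 / (n : ℂ))) - Wc) (Wc *ᵥ v)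
          (fun i => (lam:ℂ) * v i) = -((lam:ℂ) * ((vnormSq (Wc *ᵥ v) : ℝ) : ℂ)) := by
        have h1 : sesq ((Matrix.of fun (_ _ : Fin n) => (1 / (n : ℂ))) - Wc) (Wc *ᵥ v)
            (fun i => (lam:ℂ) * v i)
            = sesq (Matrix.of fun (_ _ : Fin n) => (1 / (n : ℂ))) (Wc *ᵥ v) (fun i => (lam:ℂ) * v i)
              - sesq Wc (Wc *ᵥ v) (fun i => (lam:ℂ) * v i) := by
          simp [sesq, Matrix.sub_mulVec, dotProduct_sub]
        rw [h1, sesqJ, hWvsum]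
        simp only [map_zero, zero_mul, zero_div, zero_sub, neg_inj, sesq, hsmul,
          dotProduct_smul, hdotself, smul_eq_mul]
      have habs1 : ‖(sesq ((Matrix.of fun (_ _ : Fin n) => (1 / (n : ℂ))) - Wc)
          (Wc *ᵥ v) (fun i => (lam:ℂ) * v i))‖ = lam * vnormSq (Wc *ᵥ v) := by
        rw [hs1, norm_neg, ← Complex.ofReal_mul, Complex.norm_real, Real.norm_eq_abs, abs_of_nonneg]
        positivity
      have hvy : vnormSq (fun i => (lam:ℂ) * v i) = lam^2 * vnormSq v := by
        simp only [vnormSq, Complex.normSq_mul, Complex.normSq_ofReal, ← Finset.mul_sum]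
        ring
      rw [habs1, hsJ1, hsJ2, add_zero, norm_zero, hvy] at H'
      have hkey2 : vnormSq (Wc *ᵥ v) ≤ lam^2 * vnormSq v := by nlinarith [H']
      calc Real.sqrt (vnormSq (Wc *ᵥ v)) ≤ Real.sqrt (lam^2 * vnormSq v) :=
            Real.sqrt_le_sqrt hkey2
        _ = lam * Real.sqrt (vnormSq v) := by
            rw [Real.sqrt_mul (sq_nonneg lam), Real.sqrt_sq hlam0]
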